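/- The polynomial P_g(X) = X^{2g+1} - 2X^{2g-1} - 2X^2 + 1 has exactly one real root greater than √2. -/

import Mathlib

theorem stmt_0 (g : ℕ) (hg : 2 ≤ g) :
    ∃! α : ℝ, Real.sqrt 2 < α ∧
      α ^ (2 * g + 1) - 2 * α ^ (2 * g - 1) - 2 * α ^ 2 + 1 = 0 := by
  obtain ⟨m, rfl⟩ := Nat.exists_eq_add_of_le hg
  have h1 : 2 * (2 + m) + 1 = 2 * m + 5 := by ring
  have h2 : 2 * (2 + m) - 1 = 2 * m + 3 := by omega
  simp only [h1, h2]
  set f : ℝ → ℝ := fun x => x ^ (2*m+5) - 2 * x ^ (2*m+3) - 2 * x ^ 2 + 1 with hf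
  have hs0 : (0:ℝ) < Real.sqrt 2 := Real.sqrt_pos.mpr (by norm_num)
  have hs1 : (1:ℝ) ≤ Real.sqrt 2 := by
    rw [show (1:ℝ) = Real.sqrt 1 by simp]
    exact Real.sqrt_le_sqrt (by norm_num)
  have hsq : Real.sqrt 2 ^ 2 = 2 := Real.sq_sqrt (by norm_num)
  have hs2 : Real.sqrt 2 < 2 := by nlinarith [hsq, hs0]
  -- derivative
  have hderiv : ∀ x : ℝ, HasDerivAt f
      ((2*m+5 : ℝ) * x ^ (2*m+4) - 2 * ((2*m+3 : ℝ) * x ^ (2*m+2)) - 2 * (2 * x)) x := by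
    intro x
    have h := (((hasDerivAt_pow (2*m+5) x).sub
      ((hasDerivAt_pow (2*m+3) x).const_mul 2)).sub
      ((hasDerivAt_pow 2 x).const_mul 2)).add_const 1
    have e1 : 2*m+5-1 = 2*m+4 := by omega
    have e2 : 2*m+3-1 = 2*m+2 := by omega
    rw [e1, e2] at h
    convert h using 1 <;> try rfl
    push_cast
    ring
  have hcont : Continuous f := by
    fun_prop
  -- strict mono on Ici √2
  have hmono : StrictMonoOn f (Set.Ici (Real.sqrt 2)) := by
    apply strictMonoOn_of_deriv_pos (convex_Ici _) hcont.continuousOn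
    intro x hx
    rw [interior_Ici] at hx
    rw [(hderiv x).deriv]
    have hx0 : 0 < x := lt_trans hs0 hx
    have hx1 : 1 < x := lt_of_le_of_lt hs1 hx
    have hx2 : 2 < x ^ 2 := by
      calc (2:ℝ) = Real.sqrt 2 ^ 2 := hsq.symm
      _ < x ^ 2 := by
        exact pow_lt_pow_left₀ hx (le_of_lt hs0) (by norm_num)
    have e1 : x ^ (2*m+4) = x ^ (2*m+2) * x ^ 2 := by ring
    have e2 : x ^ (2*m+2) = x ^ (2*m+1) * x := by ring
    have h3 : (1:ℝ) ≤ x ^ (2*m+1) := one_le_pow₀ (le_of_lt hx1)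
    have h4 : (0:ℝ) < x ^ (2*m+1) := lt_of_lt_of_le one_pos h3
    have hm : (0:ℝ) ≤ (m:ℝ) := Nat.cast_nonneg m
    rw [e1, e2]
    nlinarith [mul_pos h4 hx0, mul_le_mul_of_nonneg_right h3 (le_of_lt hx0),
      mul_pos (mul_pos h4 hx0) (sub_pos.mpr hx2)]
  -- values at endpoints
  have hfa : f (Real.sqrt 2) = -3 := by
    have : Real.sqrt 2 ^ (2*m+5) = Real.sqrt 2 ^ (2*m+3) * Real.sqrt 2 ^ 2 := by ring
    simp only [hf, this, hsq]
    ring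
  have hfb : 0 < f 2 := by
    have : f 2 = 2 ^ (2*m+4) - 7 := by
      simp only [hf]
      have : (2:ℝ) ^ (2*m+5) = 2 * 2 ^ (2*m+4) := by ring
      rw [this]
      have : (2:ℝ) ^ (2*m+3) * 2 = 2 ^ (2*m+4) := by ring
      nlinarith [this]
    rw [this]
    have : (2:ℝ) ^ 4 ≤ 2 ^ (2*m+4) := pow_le_pow_right₀ (by norm_num) (by omega)
    norm_num at this ⊢
    linarith
  -- existence via IVT
  have hIVT := intermediate_value_Ioo (le_of_lt hs2) hcont.continuousOn
  have h0mem : (0:ℝ) ∈ Set.Ioo (f (Real.sqrt 2)) (f 2) := by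
    rw [hfa]; exact ⟨by norm_num, hfb⟩
  obtain ⟨α, hαmem, hα⟩ := hIVT h0mem
  refine ⟨α, ⟨hαmem.1, hα⟩, ?_⟩
  intro β hβ
  have := hmono.injOn (le_of_lt hβ.1 : β ∈ Set.Ici _) (le_of_lt hαmem.1 : α ∈ Set.Ici _)
  exact this (by rw [hα]; exact hβ.2)
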